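/- Let α > 1, let L : [0,∞) → (0,∞) be slowly varying at infinity, and let k : (0,∞) → (0,∞) be a continuous integrable function with k(t) ~ L(t)t^{−α−1} as t → ∞ (i.e. k is regularly varying at infinity with index −1−α). Define K(x) = ∫ₓ^∞ k(s) ds and suppose β²∫₀^∞ K(s)² ds < 1 with β ≠ 0, σ ≠ 0. Then the function γ(Δ) = β² · (σ²/(1 − β²∫₀^∞ K(s)² ds)) · ∫₀^∞ K(s)K(s+Δ) ds is integrable on (0,∞) and satisfies γ(Δ) ~ β² · (σ²/(1 − β²∫₀^∞ K(s)² ds)) · (∫₀^∞ K(s) ds) · (1/α) L(Δ) Δ^{−α} as Δ → ∞. -/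

import Mathlib

open MeasureTheory Filter Set
open scoped ENNReal

/-- `L : (0,∞) → (0,∞)` is slowly varying at infinity if `L(xt)/L(t) → 1` as `t → ∞`
for every `x > 0`. -/

def SlowlyVarying (L : ℝ → ℝ) : Prop :=
  ∀ x > (0:ℝ), Filter.Tendsto (fun t => L (x * t) / L t) Filter.atTop (nhds 1)

private lemma uct (ψ : ℝ → ℝ) (hψ : Continuous ψ)
    (h : ∀ a : ℝ, Tendsto (fun u => ψ (u + a) - ψ u) atTop (nhds 0)) :
    ∀ ε > (0:ℝ), ∃ N : ℝ, ∀ u ≥ N, ∀ a ∈ Icc (0:ℝ) 1, |ψ (u + a) - ψ u| ≤ ε := by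
  by_contra hcon
  push_neg at hcon
  obtain ⟨ε, hε, hcon⟩ := hcon
  -- choose sequences
  have hseq : ∀ n : ℕ, ∃ u : ℝ, u ≥ n ∧ ∃ a ∈ Icc (0:ℝ) 1, ε < |ψ (u + a) - ψ u| := by
    intro n; obtain ⟨u, hu, a, ha, hgt⟩ := hcon n; exact ⟨u, hu, a, ha, hgt⟩
  choose u hu a ha hgt using hseq
  have hutop : Tendsto u atTop atTop :=
    tendsto_atTop_mono hu tendsto_natCast_atTop_atTop
  have hvtop : Tendsto (fun n => u n + a n) atTop atTop :=
    tendsto_atTop_mono (fun n => le_add_of_nonneg_right (ha n).1) hutop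
  set A : ℕ → Set ℝ := fun k =>
    Icc (0:ℝ) 1 ∩ ⋂ n ∈ Ici k, {x | |ψ (u n + x) - ψ (u n)| ≤ ε/3} with hA
  set B : ℕ → Set ℝ := fun k =>
    Icc (-1:ℝ) 2 ∩ ⋂ n ∈ Ici k, {x | |ψ (u n + a n - x) - ψ (u n + a n)| ≤ ε/3} with hB
  have hAclosed : ∀ k, IsClosed (A k) := by
    intro k
    refine isClosed_Icc.inter (isClosed_biInter fun n _ => ?_)
    exact isClosed_le (by fun_prop) continuous_const
  have hBclosed : ∀ k, IsClosed (B k) := by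
    intro k
    refine isClosed_Icc.inter (isClosed_biInter fun n _ => ?_)
    exact isClosed_le (by fun_prop) continuous_const
  have hAmono : Monotone A := by
    intro i j hij
    refine inter_subset_inter_right _ ?_
    exact biInter_subset_biInter_left (fun n hn => le_trans hij hn)
  have hBmono : Monotone B := by
    intro i j hij
    refine inter_subset_inter_right _ ?_
    exact biInter_subset_biInter_left (fun n hn => le_trans hij hn)
  have hAunion : ⋃ k, A k = Icc (0:ℝ) 1 := by
    apply subset_antisymm
    · exact iUnion_subset fun k => inter_subset_left
    · intro x hx
      have : Tendsto (fun n => ψ (u n + x) - ψ (u n)) atTop (nhds 0) := by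
        have := (h x).comp hutop
        exact this
      have : ∀ᶠ n in atTop, |ψ (u n + x) - ψ (u n)| ≤ ε/3 := by
        have h2 := this.abs
        rw [show |(0:ℝ)| = 0 by simp] at h2
        exact h2.eventually_le_const (by positivity)
      obtain ⟨k, hk⟩ := this.exists_forall_of_atTop
      exact mem_iUnion.2 ⟨k, hx, by simpa using fun n hn => hk n hn⟩
  have hBunion : ⋃ k, B k = Icc (-1:ℝ) 2 := by
    apply subset_antisymm
    · exact iUnion_subset fun k => inter_subset_left
    · intro x hx
      have : Tendsto (fun n => ψ (u n + a n - x) - ψ (u n + a n)) atTop (nhds 0) := by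
        have := (h (-x)).comp hvtop
        simpa [sub_eq_add_neg, Function.comp_def] using this
      have : ∀ᶠ n in atTop, |ψ (u n + a n - x) - ψ (u n + a n)| ≤ ε/3 := by
        have h2 := this.abs
        rw [show |(0:ℝ)| = 0 by simp] at h2
        exact h2.eventually_le_const (by positivity)
      obtain ⟨k, hk⟩ := this.exists_forall_of_atTop
      exact mem_iUnion.2 ⟨k, hx, by simpa using fun n hn => hk n hn⟩
  have hAm : ∀ k, MeasurableSet (A k) := fun k => (hAclosed k).measurableSet
  have hBm : ∀ k, MeasurableSet (B k) := fun k => (hBclosed k).measurableSet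
  have htA : Tendsto (fun k => volume (A k)) atTop (nhds (volume (Icc (0:ℝ) 1))) := by
    rw [← hAunion]; exact tendsto_measure_iUnion_atTop hAmono
  have htB : Tendsto (fun k => volume (B k)) atTop (nhds (volume (Icc (-1:ℝ) 2))) := by
    rw [← hBunion]; exact tendsto_measure_iUnion_atTop hBmono
  rw [Real.volume_Icc] at htA htB
  have hAev : ∀ᶠ k in atTop, ENNReal.ofReal (3/4) < volume (A k) :=
    htA.eventually_const_lt (by rw [ENNReal.ofReal_lt_ofReal_iff] <;> norm_num)
  have hBev : ∀ᶠ k in atTop, ENNReal.ofReal (11/4) < volume (B k) :=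
    htB.eventually_const_lt (by rw [ENNReal.ofReal_lt_ofReal_iff] <;> norm_num)
  obtain ⟨k, hkA, hkB⟩ := (hAev.and hBev).exists
  set B' : Set ℝ := (fun x => a k - x) ⁻¹' B k with hB'
  have hB'm : MeasurableSet B' := (hBm k).preimage (by fun_prop)
  have hB'vol : volume B' = volume (B k) :=
    (MeasureTheory.Measure.measurePreserving_sub_left volume (a k)).measure_preimage
      (hBm k).nullMeasurableSet
  have hB'sub : B' ⊆ Icc (a k - 2) (a k + 1) := by
    intro x hx
    have h1 : a k - x ∈ Icc (-1:ℝ) 2 := (hx : a k - x ∈ B k).1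
    constructor <;> [linarith [h1.2]; linarith [h1.1]]
  have hIsub : Icc (0:ℝ) 1 ⊆ Icc (a k - 2) (a k + 1) := by
    intro x hx
    constructor <;> [linarith [hx.1, (ha k).2]; linarith [hx.2, (ha k).1]]
  have hI3 : volume (Icc (a k - 2) (a k + 1)) = ENNReal.ofReal 3 := by
    rw [Real.volume_Icc]; norm_num
  have hdiff : volume (Icc (0:ℝ) 1 \ B') ≤ ENNReal.ofReal (1/4) := by
    have h1 : volume (Icc (0:ℝ) 1 \ B') ≤ volume (Icc (a k - 2) (a k + 1) \ B') :=
      measure_mono (diff_subset_diff_left hIsub)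
    have h2 : volume (Icc (a k - 2) (a k + 1) \ B')
        = volume (Icc (a k - 2) (a k + 1)) - volume B' := by
      refine measure_diff hB'sub hB'm.nullMeasurableSet ?_
      rw [hB'vol]
      exact ((measure_mono (inter_subset_left : B k ⊆ _)).trans_lt (by
        rw [Real.volume_Icc]; exact ENNReal.ofReal_lt_top)).ne
    refine h1.trans ?_
    rw [h2, hI3, hB'vol]
    refine le_trans (tsub_le_tsub le_rfl hkB.le) (le_of_eq ?_)
    rw [← ENNReal.ofReal_sub 3 (by norm_num : (0:ℝ) ≤ 11/4)]
    norm_num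
  have hCvol : ENNReal.ofReal (3/4) ≤ volume (Icc (0:ℝ) 1 ∩ B') := by
    have h1 : volume (Icc (0:ℝ) 1) ≤ volume (Icc (0:ℝ) 1 ∩ B') + volume (Icc (0:ℝ) 1 \ B') :=
      measure_le_inter_add_diff _ _ _
    rw [Real.volume_Icc] at h1
    have h2 : ENNReal.ofReal 1 ≤ volume (Icc (0:ℝ) 1 ∩ B') + ENNReal.ofReal (1/4) := by
      refine le_trans (le_of_eq (by norm_num)) (h1.trans (add_le_add le_rfl hdiff))
    have h3 := tsub_le_iff_right.mpr h2
    refine le_trans (le_of_eq ?_) h3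
    rw [← ENNReal.ofReal_sub _ (by norm_num)]
    norm_num
  have hnon : (A k ∩ B').Nonempty := by
    by_contra hne
    rw [Set.not_nonempty_iff_eq_empty] at hne
    have hdisj : Disjoint (A k) (Icc (0:ℝ) 1 ∩ B') := by
      rw [Set.disjoint_iff_inter_eq_empty]
      apply subset_antisymm _ (empty_subset _)
      intro x hx
      rw [← hne]
      exact ⟨hx.1, hx.2.2⟩
    have hun : volume (A k ∪ (Icc (0:ℝ) 1 ∩ B')) = volume (A k) + volume (Icc (0:ℝ) 1 ∩ B') :=
      measure_union hdisj ((measurableSet_Icc).inter hB'm)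
    have hsub : A k ∪ (Icc (0:ℝ) 1 ∩ B') ⊆ Icc (0:ℝ) 1 :=
      union_subset inter_subset_left inter_subset_left
    have hle : volume (A k ∪ (Icc (0:ℝ) 1 ∩ B')) ≤ ENNReal.ofReal 1 := by
      refine le_trans (measure_mono hsub) (le_of_eq ?_)
      rw [Real.volume_Icc]; norm_num
    rw [hun] at hle
    have : ENNReal.ofReal (3/4) + ENNReal.ofReal (3/4) ≤ ENNReal.ofReal 1 :=
      le_trans (add_le_add hkA.le hCvol) hle
    rw [← ENNReal.ofReal_add (by norm_num) (by norm_num),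
      ENNReal.ofReal_le_ofReal_iff (by norm_num)] at this
    linarith
  obtain ⟨x, hxA, hxB'⟩ := hnon
  have hx1 : |ψ (u k + x) - ψ (u k)| ≤ ε/3 := by
    have := hxA.2
    simp only [mem_iInter, mem_setOf_eq] at this
    exact this k self_mem_Ici
  have hx2 : |ψ (u k + x) - ψ (u k + a k)| ≤ ε/3 := by
    have h0 : a k - x ∈ B k := hxB'
    have := h0.2
    simp only [mem_iInter, mem_setOf_eq] at this
    have h1 := this k self_mem_Ici
    have h2 : u k + a k - (a k - x) = u k + x := by ring
    rwa [h2] at h1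
  have := hgt k
  have htri : |ψ (u k + a k) - ψ (u k)| ≤ |ψ (u k + a k) - ψ (u k + x)| + |ψ (u k + x) - ψ (u k)| :=
    abs_sub_le _ _ _
  have h4 : |ψ (u k + a k) - ψ (u k + x)| = |ψ (u k + x) - ψ (u k + a k)| := abs_sub_comm _ _
  linarith

private lemma potter (h : ℝ → ℝ) (hpos : ∀ t > (0:ℝ), 0 < h t) (hcont : ContinuousOn h (Ioi 0))
    (hsv : ∀ x > (0:ℝ), Tendsto (fun t => h (x * t) / h t) atTop (nhds 1))
    {δ : ℝ} (hδ : 0 < δ) :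
    ∃ T : ℝ, 0 < T ∧ ∀ t ≥ T, ∀ x ≥ (1:ℝ), h (x * t) ≤ Real.exp δ * x ^ δ * h t := by
  set ψ : ℝ → ℝ := fun u => Real.log (h (Real.exp u)) with hψdef
  have hψcont : Continuous ψ := by
    apply Continuous.log
    · exact hcont.comp_continuous Real.continuous_exp (fun u => Real.exp_pos u)
    · exact fun u => (hpos _ (Real.exp_pos u)).ne'
  have hshift : ∀ a : ℝ, Tendsto (fun u => ψ (u + a) - ψ u) atTop (nhds 0) := by
    intro a
    have h1 : Tendsto (fun u => h (Real.exp a * Real.exp u) / h (Real.exp u)) atTop (nhds 1) :=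
      (hsv (Real.exp a) (Real.exp_pos a)).comp Real.tendsto_exp_atTop
    have h2 : Tendsto (fun u => Real.log (h (Real.exp a * Real.exp u) / h (Real.exp u)))
        atTop (nhds 0) := by
      have := ((Real.continuousAt_log one_ne_zero).tendsto).comp h1
      simpa [Function.comp_def] using this
    refine h2.congr fun u => ?_
    rw [Real.log_div (hpos _ (by positivity)).ne' (hpos _ (Real.exp_pos u)).ne']
    simp [hψdef, Real.exp_add, mul_comm]
  obtain ⟨N, hN⟩ := uct ψ hψcont hshift δ hδ
  -- chaining
  have hchain : ∀ n : ℕ, ∀ u ≥ N, ∀ a ∈ Icc (0:ℝ) (n+1), ψ (u + a) - ψ u ≤ δ * (n+1) := by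
    intro n
    induction n with
    | zero =>
      intro u hu a ha
      push_cast at ha ⊢
      have := hN u hu a (by simpa using ha)
      calc ψ (u+a) - ψ u ≤ |ψ (u+a) - ψ u| := le_abs_self _
        _ ≤ δ := this
        _ = δ * (0+1) := by ring
    | succ n ih =>
      intro u hu a ha
      push_cast at ha ⊢
      rcases le_or_gt a (n+1) with hle | hlt
      · have := ih u hu a ⟨ha.1, hle⟩
        nlinarith [hδ.le]
      · have h1 : ψ (u + a) - ψ (u + (a-1)) ≤ δ := by
          have := hN (u + (a-1)) (by linarith [ha.1]) 1 (by norm_num)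
          have he : u + (a-1) + 1 = u + a := by ring
          rw [he] at this
          calc ψ (u+a) - ψ (u+(a-1)) ≤ |ψ (u+a) - ψ (u+(a-1))| := le_abs_self _
            _ ≤ δ := this
        have h2 : ψ (u + (a-1)) - ψ u ≤ δ * (n+1) := by
          refine ih u hu (a-1) ⟨by linarith, by linarith [ha.2]⟩
        push_cast
        linarith
  have hkey : ∀ u ≥ N, ∀ a ≥ (0:ℝ), ψ (u + a) - ψ u ≤ δ * (a + 1) := by
    intro u hu a ha0
    have h1 : a ≤ (⌊a⌋₊ : ℝ) + 1 := (Nat.lt_floor_add_one a).le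
    have h2 := hchain ⌊a⌋₊ u hu a ⟨ha0, h1⟩
    have h3 : (⌊a⌋₊ : ℝ) ≤ a := Nat.floor_le ha0
    nlinarith
  refine ⟨Real.exp N, Real.exp_pos N, fun t ht x hx => ?_⟩
  have ht0 : 0 < t := lt_of_lt_of_le (Real.exp_pos N) ht
  have hx0 : 0 < x := lt_of_lt_of_le one_pos hx
  have hu : Real.log t ≥ N := by
    calc N = Real.log (Real.exp N) := (Real.log_exp N).symm
      _ ≤ Real.log t := Real.log_le_log (Real.exp_pos N) ht
  have hla : Real.log x ≥ 0 := Real.log_nonneg hx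
  have := hkey (Real.log t) hu (Real.log x) hla
  have hψt : ψ (Real.log t) = Real.log (h t) := by
    simp [hψdef, Real.exp_log ht0]
  have hψxt : ψ (Real.log t + Real.log x) = Real.log (h (x * t)) := by
    simp [hψdef, Real.exp_add, Real.exp_log ht0, Real.exp_log hx0, mul_comm]
  rw [hψxt, hψt] at this
  have hhxt : 0 < h (x*t) := hpos _ (by positivity)
  have hht : 0 < h t := hpos _ ht0
  have := Real.exp_le_exp.mpr (by linarith : Real.log (h (x*t)) ≤ Real.log (h t) + (δ * Real.log x + δ))
  rw [Real.exp_log hhxt, Real.exp_add, Real.exp_add, Real.exp_log hht] at this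
  calc h (x*t) ≤ h t * (Real.exp (δ * Real.log x) * Real.exp δ) := this
    _ = Real.exp δ * x ^ δ * h t := by
        rw [Real.rpow_def_of_pos hx0, mul_comm (Real.log x) δ]; ring

set_option maxHeartbeats 2000000

/-- Corollary 6.3: if `k ∈ RV_∞(−1−α)` with `α > 1`, i.e. `k(t) ~ L(t) t^{−α−1}` as `t → ∞`
with `L` slowly varying, and `β² ∫₀^∞ K² < 1` where `K(x) = ∫ₓ^∞ k(s) ds`, then
`γ(Δ) = β² (σ²/(1−β²∫₀^∞K²)) ∫₀^∞ K(s)K(s+Δ) ds` is integrable on `(0,∞)` and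
`γ(Δ) ~ β² (σ²/(1−β²∫₀^∞K²)) (∫₀^∞ K(s) ds) (1/α) L(Δ) Δ^{−α}` as `Δ → ∞`. -/
theorem blackScholesLongMemory_regvar_rate_integrable
    (σ β α : ℝ) (hσ : σ ≠ 0) (hβ : β ≠ 0) (hα : 1 < α)
    (L : ℝ → ℝ) (hLpos : ∀ t > (0:ℝ), 0 < L t) (hL : SlowlyVarying L)
    (k : ℝ → ℝ) (hkpos : ∀ t > (0:ℝ), 0 < k t)
    (hkcont : ContinuousOn k (Ioi 0))
    (hkint : IntegrableOn k (Ioi 0))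
    (hkRV : Tendsto (fun t => k t / (L t * t ^ (-α - 1))) atTop (nhds 1))
    (K : ℝ → ℝ) (hK : ∀ x ≥ (0:ℝ), K x = ∫ s in Ioi x, k s)
    (hsmall : β ^ 2 * ∫ s in Ioi (0:ℝ), K s ^ 2 < 1) :
    IntegrableOn
        (fun Δ => β ^ 2 * (σ ^ 2 / (1 - β ^ 2 * ∫ s in Ioi (0:ℝ), K s ^ 2)) *
          ∫ s in Ioi (0:ℝ), K s * K (s + Δ)) (Ioi 0) ∧
      Tendsto (fun Δ =>
          (β ^ 2 * (σ ^ 2 / (1 - β ^ 2 * ∫ s in Ioi (0:ℝ), K s ^ 2)) *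
            ∫ s in Ioi (0:ℝ), K s * K (s + Δ)) /
          (β ^ 2 * (σ ^ 2 / (1 - β ^ 2 * ∫ s in Ioi (0:ℝ), K s ^ 2)) *
            (∫ s in Ioi (0:ℝ), K s) * ((1 / α) * L Δ * Δ ^ (-α))))
        atTop (nhds 1) := by
  -- basic positivity
  have hα0 : (0:ℝ) < α := lt_trans one_pos hα
  have hq : 0 < 1 - β ^ 2 * ∫ s in Ioi (0:ℝ), K s ^ 2 := by linarith
  have hβ2 : 0 < β ^ 2 := pow_pos (abs_pos.mpr hβ) 2 |>.trans_eq (by rw [sq_abs]) |>.trans_le le_rfl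
  have hσ2 : 0 < σ ^ 2 := by positivity
  have hc0 : 0 < β ^ 2 * (σ ^ 2 / (1 - β ^ 2 * ∫ s in Ioi (0:ℝ), K s ^ 2)) := by positivity
  -- K basics
  have hkint' : ∀ x ≥ (0:ℝ), IntegrableOn k (Ioi x) := fun x hx =>
    hkint.mono_set (Ioi_subset_Ioi hx)
  have hknn : ∀ x ≥ (0:ℝ), 0 ≤ᶠ[ae (volume.restrict (Ioi x))] k := fun x hx =>
    (ae_restrict_iff' measurableSet_Ioi).2 (ae_of_all _ fun s hs =>
      (hkpos s (lt_of_le_of_lt hx hs)).le)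
  have hKpos : ∀ x ≥ (0:ℝ), 0 < K x := by
    intro x hx
    rw [hK x hx, setIntegral_pos_iff_support_of_nonneg_ae (hknn x hx) (hkint' x hx)]
    have hsub : Ioi (max x 1) ⊆ Function.support k ∩ Ioi x := by
      intro s hs
      have hs1 : 1 < s := lt_of_le_of_lt (le_max_right x 1) hs
      exact ⟨(hkpos s (by linarith)).ne', lt_of_le_of_lt (le_max_left x 1) hs⟩
    calc (0:ℝ≥0∞) < volume (Ioi (max x 1)) := by simp [Real.volume_Ioi]
      _ ≤ volume (Function.support k ∩ Ioi x) := measure_mono hsub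
  set K' : ℝ → ℝ := fun x => ∫ s in Ioi (max x 0), k s with hK'def
  have hK'anti : Antitone K' := by
    intro x y hxy
    refine setIntegral_mono_set (hkint' _ (le_max_right x 0)) (hknn _ (le_max_right x 0)) ?_
    exact HasSubset.Subset.eventuallyLE (Ioi_subset_Ioi (max_le_max hxy le_rfl))
  have hK'meas : Measurable K' := hK'anti.measurable
  have hKK' : ∀ x ≥ (0:ℝ), K x = K' x := by
    intro x hx
    rw [hK x hx, hK'def]
    simp [max_eq_left hx]
  have hKanti : ∀ x y : ℝ, 0 ≤ x → x ≤ y → K y ≤ K x := by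
    intro x y hx hxy
    rw [hKK' x hx, hKK' y (le_trans hx hxy)]
    exact hK'anti hxy
  -- the slowly varying continuous companion h
  set hfun : ℝ → ℝ := fun t => k t * t ^ (α + 1) with hfdef
  have hfpos : ∀ t > (0:ℝ), 0 < hfun t := fun t ht =>
    mul_pos (hkpos t ht) (Real.rpow_pos_of_pos ht _)
  have hfcont : ContinuousOn hfun (Ioi 0) := by
    refine hkcont.mul (fun t ht => ?_)
    exact (Real.continuousAt_rpow_const t (α+1) (Or.inl (ne_of_gt ht))).continuousWithinAt
  have hLfun : ∀ t > (0:ℝ), hfun t = (k t / (L t * t ^ (-α - 1))) * L t := by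
    intro t ht
    have hL0 : L t ≠ 0 := (hLpos t ht).ne'
    have ht0 : t ≠ 0 := ht.ne'
    have hrp : t ^ (α + 1) ≠ 0 := (Real.rpow_pos_of_pos ht _).ne'
    have h1 : t ^ (-α - 1) = (t ^ (α + 1))⁻¹ := by
      rw [← Real.rpow_neg ht.le]; ring_nf
    show k t * t ^ (α + 1) = _
    rw [h1]
    field_simp
  have hfsv : ∀ x > (0:ℝ), Tendsto (fun t => hfun (x * t) / hfun t) atTop (nhds 1) := by
    intro x hx
    have hrx : Tendsto (fun t => k (x * t) / (L (x * t) * (x * t) ^ (-α - 1))) atTop (nhds 1) := by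
      exact hkRV.comp (Tendsto.const_mul_atTop hx tendsto_id)
    have hLx := hL x hx
    have hmain := (hrx.mul hLx).div hkRV one_ne_zero
    rw [show (1:ℝ) * 1 / 1 = 1 by norm_num] at hmain
    refine hmain.congr' ?_
    filter_upwards [eventually_gt_atTop 0] with t ht
    have hxt : 0 < x * t := mul_pos hx ht
    have key : ∀ a b cc d : ℝ, (a * (b / d)) / cc = (a * b) / (d * cc) := fun a b cc d => by
      rw [mul_div_assoc', div_div]
    show k (x * t) / (L (x * t) * (x * t) ^ (-α - 1)) * (L (x * t) / L t)
        / (k t / (L t * t ^ (-α - 1))) = hfun (x * t) / hfun t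
    rw [hLfun t ht, hLfun (x * t) hxt, key]
    ring_nf
  -- Potter bound with δ = (α-1)/2
  have hδ : (0:ℝ) < (α - 1)/2 := by linarith
  obtain ⟨T₀, hT₀, hPotter⟩ := potter hfun hfpos hfcont hfsv hδ
  -- Karamata
  have hFval : ∀ t > (0:ℝ), ∀ u > (1:ℝ),
      k (t * u) * t ^ (α + 1) / hfun t = hfun (u * t) / hfun t * u ^ (-(α + 1)) := by
    intro t ht u hu
    have hu0 : (0:ℝ) < u := lt_trans one_pos hu
    have e1 : (u * t) ^ (α + 1) = u ^ (α + 1) * t ^ (α + 1) := Real.mul_rpow hu0.le ht.le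
    have e2 : u ^ (α + 1) * u ^ (-(α + 1)) = 1 := by
      rw [← Real.rpow_add hu0, show α + 1 + -(α+1) = 0 by ring, Real.rpow_zero]
    rw [div_mul_eq_mul_div]
    congr 1
    simp only [hfdef]
    rw [e1, mul_comm t u]
    linear_combination (-(k (u * t) * t ^ (α + 1))) * e2
  have karamataH : Tendsto (fun t => K t / ((1/α) * hfun t * t ^ (-α))) atTop (nhds 1) := by
    have hδα : (α-1)/2 - α - 1 < -1 := by linarith
    have hbound_int : IntegrableOn
        (fun u : ℝ => Real.exp ((α-1)/2) * u ^ ((α-1)/2 - α - 1)) (Ioi 1) :=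
      (integrableOn_Ioi_rpow_of_lt hδα one_pos).const_mul _
    have hlim : Tendsto (fun t => ∫ u in Ioi (1:ℝ), k (t * u) * t ^ (α + 1) / hfun t) atTop
        (nhds (∫ u in Ioi (1:ℝ), u ^ (-α - 1))) := by
      refine tendsto_integral_filter_of_dominated_convergence
        (fun u => Real.exp ((α-1)/2) * u ^ ((α-1)/2 - α - 1)) ?_ ?_ hbound_int ?_
      · filter_upwards [eventually_gt_atTop 0] with t ht
        have hc : ContinuousOn (fun u => k (t * u) * t ^ (α + 1) / hfun t) (Ioi 1) := by
          refine ContinuousOn.div_const (ContinuousOn.mul ?_ continuousOn_const) _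
          refine hkcont.comp (continuous_const.mul continuous_id).continuousOn ?_
          intro u hu
          exact mul_pos ht (lt_trans one_pos hu)
        exact hc.aestronglyMeasurable measurableSet_Ioi
      · filter_upwards [eventually_ge_atTop (max T₀ 1)] with t hT
        have ht : 0 < t := lt_of_lt_of_le hT₀ (le_trans (le_max_left _ _) hT)
        rw [ae_restrict_iff' measurableSet_Ioi]
        refine ae_of_all _ fun u hu => ?_
        have hu1 : (1:ℝ) < u := hu
        have hu0 : (0:ℝ) < u := lt_trans one_pos hu1
        have hFnn : 0 ≤ k (t * u) * t ^ (α + 1) / hfun t :=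
          div_nonneg (mul_nonneg (hkpos _ (mul_pos ht hu0)).le (Real.rpow_nonneg ht.le _))
            (hfpos t ht).le
        rw [Real.norm_eq_abs, abs_of_nonneg hFnn, hFval t ht u hu1]
        have hP := hPotter t (le_trans (le_max_left _ _) hT) u hu1.le
        have h1 : hfun (u * t) / hfun t ≤ Real.exp ((α-1)/2) * u ^ ((α-1)/2) :=
          (div_le_iff₀ (hfpos t ht)).mpr hP
        calc hfun (u * t) / hfun t * u ^ (-(α+1))
            ≤ Real.exp ((α-1)/2) * u ^ ((α-1)/2) * u ^ (-(α+1)) :=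
              mul_le_mul_of_nonneg_right h1 (Real.rpow_nonneg hu0.le _)
          _ = Real.exp ((α-1)/2) * u ^ ((α-1)/2 - α - 1) := by
              rw [mul_assoc, ← Real.rpow_add hu0]
              ring_nf
      · rw [ae_restrict_iff' measurableSet_Ioi]
        refine ae_of_all _ fun u hu => ?_
        have hu1 : (1:ℝ) < u := hu
        have hu0 : (0:ℝ) < u := lt_trans one_pos hu1
        have h1 := (hfsv u hu0).mul_const (u ^ (-(α+1)))
        rw [one_mul] at h1
        have he : -(α+1) = -α - 1 := by ring
        rw [he] at h1
        refine h1.congr' ?_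
        filter_upwards [eventually_gt_atTop 0] with t ht
        rw [← he]
        exact (hFval t ht u hu1).symm
    have hV : (∫ u in Ioi (1:ℝ), u ^ (-α - 1)) = 1/α := by
      rw [integral_Ioi_rpow_of_lt (by linarith) one_pos,
        show -α - 1 + 1 = -α by ring, Real.one_rpow]
      field_simp
    have hmul := hlim.const_mul α
    rw [hV, mul_one_div, div_self hα0.ne'] at hmul
    refine hmul.congr' ?_
    filter_upwards [eventually_gt_atTop 0] with t ht
    show α * ∫ u in Ioi (1:ℝ), k (t * u) * t ^ (α + 1) / hfun t
        = K t / ((1/α) * hfun t * t ^ (-α))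
    have hKt : K t = t * ∫ u in Ioi (1:ℝ), k (t * u) := by
      have h2 := integral_comp_mul_left_Ioi k 1 ht
      rw [mul_one, smul_eq_mul] at h2
      rw [hK t ht.le, h2]
      field_simp
    have hpull : ∫ u in Ioi (1:ℝ), k (t * u) * t ^ (α + 1) / hfun t
        = (∫ u in Ioi (1:ℝ), k (t * u)) * (t ^ (α+1) / hfun t) := by
      simp_rw [mul_div_assoc]
      exact integral_mul_const _ _
    rw [hpull, hKt]
    have h1 : t ^ (α + 1) = t ^ α * t := by rw [Real.rpow_add ht, Real.rpow_one]
    have h2 : t ^ (-α) = (t ^ α)⁻¹ := Real.rpow_neg ht.le α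
    rw [h1, h2]
    have htα : t ^ α ≠ 0 := (Real.rpow_pos_of_pos ht α).ne'
    field_simp
  have karamataL : Tendsto (fun t => K t / ((1/α) * L t * t ^ (-α))) atTop (nhds 1) := by
    have hmain := karamataH.mul hkRV
    rw [mul_one] at hmain
    refine hmain.congr' ?_
    filter_upwards [eventually_gt_atTop 0] with t ht
    have hL0 : L t ≠ 0 := (hLpos t ht).ne'
    have hr0 : k t / (L t * t ^ (-α - 1)) ≠ 0 :=
      (div_pos (hkpos t ht) (mul_pos (hLpos t ht) (Real.rpow_pos_of_pos ht _))).ne'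
    show K t / (1/α * hfun t * t ^ (-α)) * (k t / (L t * t ^ (-α-1)))
        = K t / (1/α * L t * t ^ (-α))
    rw [hLfun t ht]
    set r := k t / (L t * t ^ (-α - 1)) with hrdef
    have hD : 1/α * (r * L t) * t ^ (-α) = r * (1/α * L t * t ^ (-α)) := by ring
    rw [hD, div_mul_eq_mul_div, mul_comm (K t) r, mul_div_mul_left _ _ hr0]
  -- K is integrable
  have hKaesm : ∀ s : Set ℝ, MeasurableSet s → s ⊆ Ioi 0 →
      AEStronglyMeasurable K (volume.restrict s) := fun s hsm hss =>
    (hK'meas.aestronglyMeasurable.restrict).congr ((ae_restrict_iff' hsm).2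
      (ae_of_all _ fun x hx => (hKK' x (le_of_lt (hss hx))).symm))
  have hδα2 : (α-1)/2 - α < -1 := by linarith
  have hCpos : 0 < 2/α * (Real.exp ((α-1)/2) * hfun T₀ / T₀ ^ ((α-1)/2)) := by
    have := hfpos T₀ hT₀
    have := Real.rpow_pos_of_pos hT₀ ((α-1)/2)
    have := Real.exp_pos ((α-1)/2)
    positivity
  have hKub : ∀ᶠ t in atTop, K t ≤
      2/α * (Real.exp ((α-1)/2) * hfun T₀ / T₀ ^ ((α-1)/2)) * t ^ ((α-1)/2 - α) := by
    filter_upwards [karamataH.eventually_lt_const one_lt_two,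
      eventually_ge_atTop (max T₀ 1)] with t h2 hT
    have htT : T₀ ≤ t := le_trans (le_max_left _ _) hT
    have ht : 0 < t := lt_of_lt_of_le hT₀ htT
    have hW : 0 < 1/α * hfun t * t ^ (-α) :=
      mul_pos (mul_pos (by positivity) (hfpos t ht)) (Real.rpow_pos_of_pos ht _)
    have hKlt : K t < 2 * (1/α * hfun t * t ^ (-α)) := by
      have := (div_lt_iff₀ hW).mp h2
      linarith
    have hx1 : (1:ℝ) ≤ t / T₀ := (one_le_div hT₀).mpr htT
    have hP := hPotter T₀ le_rfl (t / T₀) hx1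
    rw [div_mul_cancel₀ t hT₀.ne'] at hP
    have hdiv : (t / T₀) ^ ((α-1)/2) = t ^ ((α-1)/2) / T₀ ^ ((α-1)/2) :=
      Real.div_rpow ht.le hT₀.le _
    rw [hdiv] at hP
    have hfub : hfun t ≤ Real.exp ((α-1)/2) * hfun T₀ / T₀ ^ ((α-1)/2) * t ^ ((α-1)/2) := by
      calc hfun t ≤ Real.exp ((α-1)/2) * (t ^ ((α-1)/2) / T₀ ^ ((α-1)/2)) * hfun T₀ := hP
        _ = Real.exp ((α-1)/2) * hfun T₀ / T₀ ^ ((α-1)/2) * t ^ ((α-1)/2) := by ring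
    have he : t ^ ((α-1)/2) * t ^ (-α) = t ^ ((α-1)/2 - α) := by
      rw [← Real.rpow_add ht]; ring_nf
    have htα : 0 < t ^ (-α) := Real.rpow_pos_of_pos ht _
    have hstep : 1/α * hfun t * t ^ (-α)
        ≤ 1/α * (Real.exp ((α-1)/2) * hfun T₀ / T₀ ^ ((α-1)/2) * t ^ ((α-1)/2)) * t ^ (-α) := by
      have h1 := mul_le_mul_of_nonneg_left hfub (by positivity : (0:ℝ) ≤ 1/α)
      exact mul_le_mul_of_nonneg_right h1 htα.le
    calc K t ≤ 2 * (1/α * (Real.exp ((α-1)/2) * hfun T₀ / T₀ ^ ((α-1)/2) * t ^ ((α-1)/2))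
            * t ^ (-α)) := by linarith
      _ = 2/α * (Real.exp ((α-1)/2) * hfun T₀ / T₀ ^ ((α-1)/2))
            * (t ^ ((α-1)/2) * t ^ (-α)) := by ring
      _ = 2/α * (Real.exp ((α-1)/2) * hfun T₀ / T₀ ^ ((α-1)/2)) * t ^ ((α-1)/2 - α) := by
          rw [he]
  have hKint : IntegrableOn K (Ioi 0) := by
    obtain ⟨M₀, hM₀⟩ := eventually_atTop.mp hKub
    set M := max M₀ 1 with hMdef
    have hM1 : (1:ℝ) ≤ M := le_max_right _ _
    have hM0 : (0:ℝ) < M := lt_of_lt_of_le one_pos hM1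
    have hsplit : Ioc (0:ℝ) M ∪ Ioi M = Ioi 0 := Ioc_union_Ioi_eq_Ioi hM0.le
    rw [← hsplit]
    refine IntegrableOn.union ?_ ?_
    · refine Integrable.mono' (g := fun _ => K 0) (integrableOn_const ?_)
        (hKaesm _ measurableSet_Ioc Ioc_subset_Ioi_self)
        ((ae_restrict_iff' measurableSet_Ioc).2 (ae_of_all _ fun x hx => ?_))
      · rw [Real.volume_Ioc]; exact ENNReal.ofReal_ne_top
      · rw [Real.norm_eq_abs, abs_of_nonneg (hKpos x hx.1.le).le]
        exact hKanti 0 x le_rfl hx.1.le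
    · refine Integrable.mono
        ((integrableOn_Ioi_rpow_of_lt hδα2 hM0).const_mul
          (2/α * (Real.exp ((α-1)/2) * hfun T₀ / T₀ ^ ((α-1)/2))))
        (hKaesm _ measurableSet_Ioi (Ioi_subset_Ioi hM0.le))
        ((ae_restrict_iff' measurableSet_Ioi).2 (ae_of_all _ fun x hx => ?_))
      have hx0 : 0 < x := lt_trans hM0 hx
      have hub := hM₀ x (le_trans (le_max_left _ _) hx.le)
      rw [Real.norm_eq_abs, Real.norm_eq_abs, abs_of_nonneg (hKpos x hx0.le).le,
        abs_of_nonneg (by positivity : (0:ℝ) ≤ 2/α * (Real.exp ((α-1)/2) * hfun T₀ /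
          T₀ ^ ((α-1)/2)) * x ^ ((α-1)/2 - α))]
      exact hub
  have hIpos : 0 < ∫ s in Ioi (0:ℝ), K s := by
    rw [setIntegral_pos_iff_support_of_nonneg_ae ((ae_restrict_iff' measurableSet_Ioi).2
      (ae_of_all _ fun s hs => (hKpos s hs.le).le)) hKint]
    have hsub : Ioi (0:ℝ) ⊆ Function.support K ∩ Ioi 0 := fun s hs =>
      ⟨(hKpos s hs.le).ne', hs⟩
    calc (0:ℝ≥0∞) < volume (Ioi (0:ℝ)) := by simp [Real.volume_Ioi]
      _ ≤ volume (Function.support K ∩ Ioi 0) := measure_mono hsub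
  -- ratio limits for K
  have hratio : ∀ x > (1:ℝ), Tendsto (fun t => K (x * t) / K t) atTop (nhds (x ^ (-α))) := by
    intro x hx1
    have hx0 : (0:ℝ) < x := lt_trans one_pos hx1
    have hRx : Tendsto (fun t => K (x * t) / ((1/α) * L (x * t) * (x * t) ^ (-α))) atTop
        (nhds 1) := karamataL.comp (Tendsto.const_mul_atTop hx0 tendsto_id)
    have hLx := hL x hx0
    have hmain := ((hRx.mul (hLx.mul_const (x ^ (-α)))).div karamataL one_ne_zero)
    rw [one_mul, one_mul, div_one] at hmain
    refine hmain.congr' ?_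
    filter_upwards [eventually_gt_atTop 0] with t ht
    have hxt : 0 < x * t := mul_pos hx0 ht
    have hLt : L t ≠ 0 := (hLpos t ht).ne'
    have hLxt : L (x * t) ≠ 0 := (hLpos _ hxt).ne'
    have htα : t ^ (-α) ≠ 0 := (Real.rpow_pos_of_pos ht _).ne'
    have hKt : K t ≠ 0 := (hKpos t ht.le).ne'
    have hmulα : (x * t) ^ (-α) = x ^ (-α) * t ^ (-α) := Real.mul_rpow hx0.le ht.le
    show K (x * t) / (1/α * L (x * t) * (x * t) ^ (-α)) * (L (x * t) / L t * x ^ (-α))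
        / (K t / (1/α * L t * t ^ (-α))) = K (x * t) / K t
    rw [hmulα]
    have hxα : x ^ (-α) ≠ 0 := (Real.rpow_pos_of_pos hx0 _).ne'
    field_simp
  have hshiftK : ∀ s ≥ (0:ℝ), Tendsto (fun Δ => K (s + Δ) / K Δ) atTop (nhds 1) := by
    intro s hs
    have hub : ∀ᶠ Δ in atTop, K (s + Δ) / K Δ ≤ 1 := by
      filter_upwards [eventually_gt_atTop 0] with Δ hΔ
      refine (div_le_one (hKpos Δ hΔ.le)).2 (hKanti Δ (s + Δ) hΔ.le (by linarith))
    rw [tendsto_order]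
    constructor
    · intro l hl
      have hcont : Tendsto (fun y : ℝ => y ^ (-α)) (nhdsWithin 1 (Ioi 1)) (nhds 1) := by
        have h1 : ContinuousAt (fun y : ℝ => y ^ (-α)) 1 :=
          Real.continuousAt_rpow_const 1 _ (Or.inl one_ne_zero)
        have := h1.tendsto.mono_left (nhdsWithin_le_nhds : nhdsWithin (1:ℝ) (Ioi 1) ≤ nhds 1)
        rwa [Real.one_rpow] at this
      have hev : ∀ᶠ y in nhdsWithin (1:ℝ) (Ioi 1), l < y ^ (-α) :=
        hcont.eventually_const_lt hl
      obtain ⟨x, hxlt, hx1⟩ := (hev.and self_mem_nhdsWithin).exists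
      have hl2 : ∀ᶠ Δ in atTop, l < K (x * Δ) / K Δ :=
        (hratio x hx1).eventually_const_lt hxlt
      filter_upwards [hl2, eventually_gt_atTop 0, eventually_ge_atTop (s / (x - 1))]
        with Δ h1 h2 h3
      have hxx : s + Δ ≤ x * Δ := by
        have h4 := (div_le_iff₀ (by linarith : (0:ℝ) < x - 1)).mp h3
        nlinarith
      have hKle : K (x * Δ) ≤ K (s + Δ) := hKanti (s + Δ) (x * Δ) (by linarith) hxx
      have : K (x * Δ) / K Δ ≤ K (s + Δ) / K Δ :=
        (div_le_div_iff_of_pos_right (hKpos Δ h2.le)).mpr hKle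
      linarith
    · intro u hu
      filter_upwards [hub] with Δ h1
      linarith
  -- integrand integrability and main moving-average limit
  have hK'nn : ∀ x : ℝ, 0 ≤ K' x := fun x =>
    setIntegral_nonneg measurableSet_Ioi fun s hs =>
      (hkpos s (lt_of_le_of_lt (le_max_right x 0) hs)).le
  have hGaesm : ∀ Δ ≥ (0:ℝ),
      AEStronglyMeasurable (fun s => K s * K (s + Δ)) (volume.restrict (Ioi 0)) := by
    intro Δ hΔ
    have hmeas : Measurable (fun s : ℝ => K' s * K' (s + Δ)) :=
      hK'meas.mul (hK'meas.comp (measurable_add_const Δ))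
    refine hmeas.aestronglyMeasurable.restrict.congr ?_
    refine (ae_restrict_iff' measurableSet_Ioi).2 (ae_of_all _ fun s hs => ?_)
    have hs0 : (0:ℝ) < s := hs
    show K' s * K' (s + Δ) = K s * K (s + Δ)
    rw [hKK' s hs0.le, hKK' (s + Δ) (by linarith)]
  have hmint : ∀ Δ ≥ (0:ℝ), IntegrableOn (fun s => K s * K (s + Δ)) (Ioi 0) := by
    intro Δ hΔ
    refine Integrable.mono' (g := fun s => K 0 * K s) (hKint.const_mul (K 0))
      (hGaesm Δ hΔ) ((ae_restrict_iff' measurableSet_Ioi).2 (ae_of_all _ fun s hs => ?_))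
    have hs0 : (0:ℝ) < s := hs
    have h1 : 0 ≤ K s * K (s + Δ) :=
      mul_nonneg (hKpos s hs0.le).le (hKpos (s + Δ) (by linarith)).le
    rw [Real.norm_eq_abs, abs_of_nonneg h1]
    calc K s * K (s + Δ) ≤ K s * K 0 :=
          mul_le_mul_of_nonneg_left (hKanti 0 (s + Δ) le_rfl (by linarith)) (hKpos s hs0.le).le
      _ = K 0 * K s := mul_comm _ _
  have hfK : Tendsto (fun Δ => (∫ s in Ioi (0:ℝ), K s * K (s + Δ)) / K Δ) atTop
      (nhds (∫ s in Ioi (0:ℝ), K s)) := by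
    have hdct : Tendsto (fun Δ => ∫ s in Ioi (0:ℝ), K s * K (s + Δ) / K Δ) atTop
        (nhds (∫ s in Ioi (0:ℝ), K s)) := by
      refine tendsto_integral_filter_of_dominated_convergence K ?_ ?_ hKint ?_
      · filter_upwards [eventually_ge_atTop 0] with Δ hΔ
        exact ((hGaesm Δ hΔ).mul_const (K Δ)⁻¹).congr
          (ae_of_all _ fun s => (div_eq_mul_inv _ _).symm)
      · filter_upwards [eventually_gt_atTop 0] with Δ hΔ
        refine (ae_restrict_iff' measurableSet_Ioi).2 (ae_of_all _ fun s hs => ?_)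
        have hs0 : (0:ℝ) < s := hs
        have h1 : 0 ≤ K s * K (s + Δ) / K Δ :=
          div_nonneg (mul_nonneg (hKpos s hs0.le).le (hKpos (s + Δ) (by linarith)).le)
            (hKpos Δ hΔ.le).le
        rw [Real.norm_eq_abs, abs_of_nonneg h1]
        have h2 : K (s + Δ) / K Δ ≤ 1 :=
          (div_le_one (hKpos Δ hΔ.le)).2 (hKanti Δ (s + Δ) hΔ.le (by linarith))
        calc K s * K (s + Δ) / K Δ = K s * (K (s + Δ) / K Δ) := mul_div_assoc _ _ _
          _ ≤ K s * 1 := mul_le_mul_of_nonneg_left h2 (hKpos s hs0.le).le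
          _ = K s := mul_one _
      · refine (ae_restrict_iff' measurableSet_Ioi).2 (ae_of_all _ fun s hs => ?_)
        have hs0 : (0:ℝ) < s := hs
        have h3 := (hshiftK s hs0.le).const_mul (K s)
        rw [mul_one] at h3
        exact h3.congr fun Δ => (mul_div_assoc _ _ _).symm
    refine hdct.congr fun Δ => ?_
    rw [integral_div]
  -- global measurable version of the moving average
  have hmint' : ∀ Δ : ℝ, IntegrableOn (fun s => K' s * K' (s + max Δ 0)) (Ioi 0) := by
    intro Δ
    refine (hmint (max Δ 0) (le_max_right _ _)).congr_fun (fun s hs => ?_) measurableSet_Ioi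
    have hs0 : (0:ℝ) < s := hs
    beta_reduce
    rw [hKK' s hs0.le, hKK' (s + max Δ 0) (by positivity)]
  set g : ℝ → ℝ := fun Δ => ∫ s in Ioi (0:ℝ), K' s * K' (s + max Δ 0) with hgdef
  have hgK : ∀ Δ > (0:ℝ), g Δ = ∫ s in Ioi (0:ℝ), K s * K (s + Δ) := by
    intro Δ hΔ
    rw [hgdef]
    simp only [max_eq_left hΔ.le]
    refine setIntegral_congr_fun measurableSet_Ioi fun s hs => ?_
    have hs0 : (0:ℝ) < s := hs
    rw [hKK' s hs0.le, hKK' (s + Δ) (by linarith)]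
  have hganti : Antitone g := by
    intro Δ₁ Δ₂ h12
    refine setIntegral_mono_on (hmint' Δ₂) (hmint' Δ₁) measurableSet_Ioi fun s hs => ?_
    refine mul_le_mul_of_nonneg_left ?_ (hK'nn s)
    exact hK'anti (add_le_add (le_refl s) (max_le_max h12 le_rfl))
  have hgmeas : Measurable g := hganti.measurable
  have hIntf : IntegrableOn (fun Δ => ∫ s in Ioi (0:ℝ), K s * K (s + Δ)) (Ioi 0) := by
    refine Integrable.mono' (g := fun Δ => (∫ s in Ioi (0:ℝ), K s) * K Δ)
      (hKint.const_mul _) ?_ ?_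
    · refine hgmeas.aestronglyMeasurable.restrict.congr ?_
      refine (ae_restrict_iff' measurableSet_Ioi).2 (ae_of_all _ fun Δ hΔ => hgK Δ hΔ)
    · refine (ae_restrict_iff' measurableSet_Ioi).2 (ae_of_all _ fun Δ hΔ => ?_)
      have hΔ0 : (0:ℝ) < Δ := hΔ
      have hnn : 0 ≤ ∫ s in Ioi (0:ℝ), K s * K (s + Δ) :=
        setIntegral_nonneg measurableSet_Ioi fun s hs =>
          mul_nonneg (hKpos s (le_of_lt hs)).le (hKpos (s + Δ) (by
            have : (0:ℝ) < s := hs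
            linarith)).le
      rw [Real.norm_eq_abs, abs_of_nonneg hnn]
      have hb : ∫ s in Ioi (0:ℝ), K s * K (s + Δ) ≤ ∫ s in Ioi (0:ℝ), K s * K Δ := by
        refine setIntegral_mono_on (hmint Δ hΔ0.le) (hKint.mul_const (K Δ))
          measurableSet_Ioi fun s hs => ?_
        have hs0 : (0:ℝ) < s := hs
        exact mul_le_mul_of_nonneg_left (hKanti Δ (s + Δ) hΔ0.le (by linarith))
          (hKpos s hs0.le).le
      calc ∫ s in Ioi (0:ℝ), K s * K (s + Δ) ≤ ∫ s in Ioi (0:ℝ), K s * K Δ := hb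
        _ = (∫ s in Ioi (0:ℝ), K s) * K Δ := integral_mul_const _ _
  constructor
  · exact hIntf.const_mul _
  · have hI0 : (∫ s in Ioi (0:ℝ), K s) ≠ 0 := hIpos.ne'
    have heq : ∀ Δ : ℝ,
        (β ^ 2 * (σ ^ 2 / (1 - β ^ 2 * ∫ s in Ioi (0:ℝ), K s ^ 2)) *
            ∫ s in Ioi (0:ℝ), K s * K (s + Δ)) /
          (β ^ 2 * (σ ^ 2 / (1 - β ^ 2 * ∫ s in Ioi (0:ℝ), K s ^ 2)) *
            (∫ s in Ioi (0:ℝ), K s) * ((1 / α) * L Δ * Δ ^ (-α)))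
        = (∫ s in Ioi (0:ℝ), K s * K (s + Δ)) /
          ((∫ s in Ioi (0:ℝ), K s) * ((1 / α) * L Δ * Δ ^ (-α))) := by
      intro Δ
      rw [mul_assoc (β ^ 2 * (σ ^ 2 / (1 - β ^ 2 * ∫ s in Ioi (0:ℝ), K s ^ 2))),
        mul_div_mul_left _ _ hc0.ne']
    refine Tendsto.congr (fun Δ => (heq Δ).symm) ?_
    have hmain := (hfK.mul karamataL).mul_const (∫ s in Ioi (0:ℝ), K s)⁻¹
    rw [mul_one, mul_inv_cancel₀ hI0] at hmain
    refine hmain.congr' ?_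
    filter_upwards [eventually_gt_atTop 0] with Δ hΔ
    have hKΔ : K Δ ≠ 0 := (hKpos Δ hΔ.le).ne'
    have hv : (1/α) * L Δ * Δ ^ (-α) ≠ 0 := by
      have h1 := hLpos Δ hΔ
      have h2 := Real.rpow_pos_of_pos hΔ (-α)
      positivity
    show (∫ s in Ioi (0:ℝ), K s * K (s + Δ)) / K Δ * (K Δ / ((1/α) * L Δ * Δ ^ (-α)))
        * (∫ s in Ioi (0:ℝ), K s)⁻¹
      = (∫ s in Ioi (0:ℝ), K s * K (s + Δ)) /
          ((∫ s in Ioi (0:ℝ), K s) * ((1 / α) * L Δ * Δ ^ (-α)))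
    field_simp [hKΔ, hI0, (hLpos Δ hΔ).ne', (Real.rpow_pos_of_pos hΔ (-α)).ne', hα0.ne']
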